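/- arXiv:1109.1549 — 3 statements merged into one kernel-verified Lean document; each statement's English description precedes it below -/
import Mathlib

section
/- For the Ising model on a finite graph G at inverse temperature β > 0 with free boundary conditions, the partition function satisfies Z = 2^{|V(G)|} · cosh(β)^{|E(G)|} · Σ_{ω ∈ E_G} tanh(β)^{|ω|}, where E_G is the set of subsets ω of the edges of G such that every vertex is incident to an even number of edges of ω. -/
open Finset

/-- The spin product `σ_x σ_y` along an edge of a graph, for spins `σ : V → {±1}`
(encoded as units of `ℤ`), viewed as a real number. -/
def edgeSpin {V : Type*} (σ : V → ℤˣ) : Sym2 V → ℝ :=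
  Sym2.lift ⟨fun x y => (((σ x * σ y : ℤˣ) : ℤ) : ℝ), by
    intro x y; simp [mul_comm]⟩

lemma edgeSpin_pm {V : Type*} (σ : V → ℤˣ) (e : Sym2 V) :
    edgeSpin σ e = 1 ∨ edgeSpin σ e = -1 := by
  induction e using Sym2.ind with
  | _ x y =>
    rcases Int.units_eq_one_or (σ x * σ y) with h | h <;>
      simp [edgeSpin, ← Units.val_mul, h]

lemma exp_pm (β s : ℝ) (hs : s = 1 ∨ s = -1) :
    Real.exp (β * s) = Real.cosh β * (1 + Real.tanh β * s) := by
  have hc : Real.cosh β ≠ 0 := (Real.cosh_pos β).ne'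
  rcases hs with h | h <;> subst h
  · rw [Real.tanh_eq_sinh_div_cosh]; field_simp; rw [Real.cosh_add_sinh]
  · rw [Real.tanh_eq_sinh_div_cosh]; field_simp
    rw [← Real.cosh_sub_sinh]; ring

lemma sum_units_pow (d : ℕ) :
    ∑ u : ℤˣ, ((u : ℤ) : ℝ) ^ d = if Even d then 2 else 0 := by
  have : (Finset.univ : Finset ℤˣ) = {1, -1} := by decide
  rw [this, Finset.sum_pair (by decide)]
  by_cases h : Even d
  · simp [h.neg_one_pow, h]; norm_num
  · simp [(Nat.not_even_iff_odd.1 h).neg_one_pow, h]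

lemma edgeSpin_eq_prod {V : Type*} [Fintype V] [DecidableEq V] (σ : V → ℤˣ)
    (e : Sym2 V) (he : ¬ e.IsDiag) :
    edgeSpin σ e = ∏ v : V, (if v ∈ e then ((σ v : ℤ) : ℝ) else 1) := by
  induction e using Sym2.ind with
  | _ x y =>
    have hxy : x ≠ y := by simpa using he
    rw [← Finset.prod_filter]
    have hf : (Finset.univ.filter (· ∈ s(x, y))) = {x, y} := by
      ext v; simp [Sym2.mem_iff]
    rw [hf, Finset.prod_pair hxy]
    simp [edgeSpin]

/-- **Low/high temperature expansion of the Ising partition function.**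
For the Ising model on a finite graph `G` at inverse temperature `β > 0` with free
boundary conditions, the partition function
`Z = Σ_σ exp (β Σ_{xy ∈ E} σ_x σ_y)` equals
`2^{|V|} cosh(β)^{|E|} Σ_{ω ∈ E_G} tanh(β)^{|ω|}`,
where `E_G` is the collection of edge subsets in which every vertex has even degree. -/
theorem ising_partition_high_temperature_expansion
    {V : Type*} [Fintype V] [DecidableEq V] (G : SimpleGraph V) [DecidableRel G.Adj]
    (β : ℝ) (hβ : 0 < β) :
    ∑ σ : V → ℤˣ, Real.exp (β * ∑ e ∈ G.edgeFinset, edgeSpin σ e) =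
      2 ^ (Fintype.card V) * Real.cosh β ^ G.edgeFinset.card *
        ∑ ω ∈ G.edgeFinset.powerset.filter
            (fun ω => ∀ v : V, Even ((ω.filter (fun e => v ∈ e)).card)),
          Real.tanh β ^ ω.card := by
  classical
  have hE : ∀ σ : V → ℤˣ, Real.exp (β * ∑ e ∈ G.edgeFinset, edgeSpin σ e)
      = Real.cosh β ^ G.edgeFinset.card *
        ∏ e ∈ G.edgeFinset, (1 + Real.tanh β * edgeSpin σ e) := by
    intro σ
    rw [Finset.mul_sum, Real.exp_sum,
      Finset.prod_congr rfl (fun e _ => exp_pm β _ (edgeSpin_pm σ e)),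
      Finset.prod_mul_distrib, Finset.prod_const]
  have hprod : ∀ σ : V → ℤˣ, ∏ e ∈ G.edgeFinset, (1 + Real.tanh β * edgeSpin σ e)
      = ∑ ω ∈ G.edgeFinset.powerset, Real.tanh β ^ ω.card * ∏ e ∈ ω, edgeSpin σ e := by
    intro σ
    have h := Finset.prod_add (fun e => Real.tanh β * edgeSpin σ e) (fun _ => (1 : ℝ))
      G.edgeFinset
    simp only [Finset.prod_const_one, mul_one] at h
    calc ∏ e ∈ G.edgeFinset, (1 + Real.tanh β * edgeSpin σ e)
        = ∏ e ∈ G.edgeFinset, (Real.tanh β * edgeSpin σ e + 1) := by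
          refine Finset.prod_congr rfl fun e _ => by ring
      _ = ∑ ω ∈ G.edgeFinset.powerset, ∏ e ∈ ω, Real.tanh β * edgeSpin σ e := h
      _ = _ := by
          refine Finset.sum_congr rfl fun ω _ => ?_
          rw [Finset.prod_mul_distrib, Finset.prod_const]
  have hin : ∀ ω ∈ G.edgeFinset.powerset, (∑ σ : V → ℤˣ, ∏ e ∈ ω, edgeSpin σ e)
      = if (∀ v : V, Even ((ω.filter (fun e => v ∈ e)).card))
          then (2 : ℝ) ^ (Fintype.card V) else 0 := by
    intro ω hω
    rw [Finset.mem_powerset] at hω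
    have hne : ∀ e ∈ ω, ¬ (e : Sym2 V).IsDiag := fun e he =>
      G.not_isDiag_of_mem_edgeSet ((SimpleGraph.mem_edgeFinset).1 (hω he))
    have h1 : ∀ σ : V → ℤˣ, ∏ e ∈ ω, edgeSpin σ e
        = ∏ v : V, ((σ v : ℤ) : ℝ) ^ ((ω.filter (fun e => v ∈ e)).card) := by
      intro σ
      rw [Finset.prod_congr rfl (fun e he => edgeSpin_eq_prod σ e (hne e he)),
        Finset.prod_comm]
      refine Finset.prod_congr rfl fun v _ => ?_
      rw [Finset.prod_ite, Finset.prod_const, Finset.prod_const_one, mul_one]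
    simp_rw [h1]
    have h2 := Finset.prod_univ_sum (fun _ : V => (Finset.univ : Finset ℤˣ))
      (fun v u => ((u : ℤ) : ℝ) ^ ((ω.filter (fun e => v ∈ e)).card))
    rw [Fintype.piFinset_univ] at h2
    rw [← h2]
    simp_rw [sum_units_pow]
    by_cases hP : ∀ v : V, Even ((ω.filter (fun e => v ∈ e)).card)
    · rw [if_pos hP]
      rw [Finset.prod_congr rfl (fun v _ => if_pos (hP v)), Finset.prod_const,
        Finset.card_univ]
    · rw [if_neg hP]
      push_neg at hP
      obtain ⟨v, hv⟩ := hP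
      exact Finset.prod_eq_zero (Finset.mem_univ v) (if_neg hv)
  simp_rw [hE, hprod]
  rw [← Finset.mul_sum, Finset.sum_comm]
  have h3 : ∀ ω ∈ G.edgeFinset.powerset,
      (∑ σ : V → ℤˣ, Real.tanh β ^ ω.card * ∏ e ∈ ω, edgeSpin σ e)
      = if (∀ v : V, Even ((ω.filter (fun e => v ∈ e)).card))
          then (2 : ℝ) ^ (Fintype.card V) * Real.tanh β ^ ω.card else 0 := by
    intro ω hω
    rw [← Finset.mul_sum, hin ω hω]
    by_cases hP : ∀ v : V, Even ((ω.filter (fun e => v ∈ e)).card) <;>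
      simp [hP, mul_comm]
  rw [Finset.sum_congr rfl h3, ← Finset.sum_filter, ← Finset.mul_sum]
  ring
end

section
/- For the Ising model on a finite graph G at inverse temperature β > 0 with free boundary conditions, the two-point correlation satisfies μ[σ_a σ_b] = (Σ_{ω ∈ E_G(a,b)} tanh(β)^{|ω|}) / (Σ_{ω ∈ E_G} tanh(β)^{|ω|}), where E_G(a,b) is the set of edge subsets in which every vertex has even degree except a and b, which have odd degree. -/
open Finset

def uSpin {V : Type*} (σ : V → ℤˣ) : Sym2 V → ℤˣ :=
  Sym2.lift ⟨fun x y => σ x * σ y, fun x y => mul_comm _ _⟩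

noncomputable def uval : ℤˣ →* ℝ := (Int.castRingHom ℝ).toMonoidHom.comp (Units.coeHom ℤ)

lemma edgeSpin_eq {V : Type*} (σ : V → ℤˣ) (e : Sym2 V) :
    edgeSpin σ e = uval (uSpin σ e) := by
  induction e using Sym2.ind with | _ x y => rfl

lemma univ_units_int : (univ : Finset ℤˣ) = {1, -1} := by
  ext u; simp [Int.units_eq_one_or u]

lemma sum_uval_pow (d : ℕ) : ∑ s : ℤˣ, uval (s ^ d) = if Even d then 2 else 0 := by
  rw [univ_units_int, Finset.sum_pair (by decide : (1 : ℤˣ) ≠ -1)]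
  simp only [one_pow, map_one, map_pow]
  have : uval (-1) = -1 := by simp [uval]
  rw [this]
  rcases Nat.even_or_odd d with h | h
  · rw [h.neg_one_pow, if_pos h]; norm_num
  · rw [h.neg_one_pow, if_neg (Nat.not_even_iff_odd.mpr h)]; norm_num

lemma uSpin_eq_prod {V : Type*} [Fintype V] [DecidableEq V] (σ : V → ℤˣ) {e : Sym2 V}
    (he : ¬ e.IsDiag) : uSpin σ e = ∏ v, σ v ^ (if v ∈ e then 1 else 0) := by
  induction e using Sym2.ind with | _ x y =>
  have hxy : x ≠ y := by simpa using he
  have h1 : (univ.filter (fun v => v ∈ s(x, y))) = {x, y} := by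
    ext v; simp [Sym2.mem_iff]
  calc uSpin σ s(x, y) = ∏ v ∈ {x, y}, σ v := by rw [Finset.prod_pair hxy]; rfl
    _ = ∏ v ∈ univ.filter (fun v => v ∈ s(x, y)), σ v := by rw [h1]
    _ = ∏ v, σ v ^ (if v ∈ s(x, y) then 1 else 0) := by
        rw [Finset.prod_filter]
        exact Finset.prod_congr rfl fun v _ => by split_ifs <;> simp

lemma prod_uSpin {V : Type*} [Fintype V] [DecidableEq V] (σ : V → ℤˣ) (ω : Finset (Sym2 V))
    (hω : ∀ e ∈ ω, ¬ e.IsDiag) :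
    ∏ e ∈ ω, uSpin σ e = ∏ v, σ v ^ (ω.filter (fun e => v ∈ e)).card := by
  calc ∏ e ∈ ω, uSpin σ e = ∏ e ∈ ω, ∏ v, σ v ^ (if v ∈ e then 1 else 0) :=
        Finset.prod_congr rfl fun e he => uSpin_eq_prod σ (hω e he)
    _ = ∏ v, ∏ e ∈ ω, σ v ^ (if v ∈ e then 1 else 0) := Finset.prod_comm
    _ = ∏ v, σ v ^ (∑ e ∈ ω, if v ∈ e then 1 else 0) :=
        Finset.prod_congr rfl fun v _ => Finset.prod_pow_eq_pow_sum ω _ (σ v)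
    _ = _ := by simp only [Finset.card_filter]

lemma sum_sigma_prod {V : Type*} [Fintype V] [DecidableEq V] (d : V → ℕ) :
    ∑ σ : V → ℤˣ, uval (∏ v, σ v ^ d v) =
      if ∀ v, Even (d v) then (2 : ℝ) ^ Fintype.card V else 0 := by
  have h : ∑ σ : V → ℤˣ, uval (∏ v, σ v ^ d v)
      = ∏ v, ∑ s : ℤˣ, uval (s ^ d v) := by
    rw [Finset.prod_univ_sum, ← Fintype.piFinset_univ]
    exact Finset.sum_congr rfl fun σ _ => map_prod uval _ _
  rw [h]
  simp only [sum_uval_pow]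
  by_cases hd : ∀ v, Even (d v)
  · rw [if_pos hd, Finset.prod_congr rfl (fun v _ => if_pos (hd v)), Finset.prod_const,
      Finset.card_univ]
  · rw [if_neg hd]; push_neg at hd; obtain ⟨v, hv⟩ := hd
    exact Finset.prod_eq_zero (mem_univ v) (if_neg hv)

lemma master {V : Type*} [Fintype V] [DecidableEq V] (G : SimpleGraph V) [DecidableRel G.Adj]
    (β : ℝ) (c : V → ℕ) :
    ∑ σ : V → ℤˣ, uval (∏ v, σ v ^ c v) *
        Real.exp (β * ∑ e ∈ G.edgeFinset, edgeSpin σ e) =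
    (Real.cosh β ^ G.edgeFinset.card * 2 ^ Fintype.card V) *
      ∑ ω ∈ G.edgeFinset.powerset.filter
        (fun ω => ∀ v, Even ((ω.filter (fun e => v ∈ e)).card + c v)),
        Real.tanh β ^ ω.card := by
  have hspin : ∀ (σ : V → ℤˣ) (e : Sym2 V), edgeSpin σ e = 1 ∨ edgeSpin σ e = -1 := by
    intro σ e
    induction e using Sym2.ind with | _ x y =>
    rcases Int.units_eq_one_or (σ x * σ y) with h | h
    · left; show (((σ x * σ y : ℤˣ) : ℤ) : ℝ) = 1; rw [h]; norm_num
    · right; show (((σ x * σ y : ℤˣ) : ℤ) : ℝ) = -1; rw [h]; norm_num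
  have ht : Real.cosh β * Real.tanh β = Real.sinh β := by
    rw [Real.tanh_eq_sinh_div_cosh]
    field_simp
  have hexp : ∀ (σ : V → ℤˣ) (e : Sym2 V),
      Real.exp (β * edgeSpin σ e) = Real.cosh β * (1 + Real.tanh β * edgeSpin σ e) := by
    intro σ e
    rcases hspin σ e with h | h
    · rw [h, mul_one, mul_one, mul_add, mul_one, ht, Real.cosh_add_sinh]
    · have h2 : Real.cosh β * (1 + Real.tanh β * (-1)) = Real.cosh β - Real.sinh β := by
        rw [mul_add, mul_one,
          show Real.cosh β * (Real.tanh β * (-1)) = -(Real.cosh β * Real.tanh β) by ring, ht]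
        ring
      rw [h, mul_neg_one, h2, Real.cosh_sub_sinh]
  have hprod : ∀ σ : V → ℤˣ,
      ∏ e ∈ G.edgeFinset, (1 + Real.tanh β * edgeSpin σ e) =
        ∑ ω ∈ G.edgeFinset.powerset, Real.tanh β ^ ω.card * ∏ e ∈ ω, edgeSpin σ e := by
    intro σ
    rw [Finset.prod_congr rfl fun e _ => add_comm 1 (Real.tanh β * edgeSpin σ e),
      Finset.prod_add]
    exact Finset.sum_congr rfl fun ω _ => by
      rw [Finset.prod_const_one, mul_one, Finset.prod_mul_distrib, Finset.prod_const]
  have hinner : ∀ (σ : V → ℤˣ) (ω : Finset (Sym2 V)), ω ∈ G.edgeFinset.powerset →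
      uval (∏ v, σ v ^ c v) * ∏ e ∈ ω, edgeSpin σ e =
        uval (∏ v, σ v ^ ((ω.filter (fun e => v ∈ e)).card + c v)) := by
    intro σ ω hω
    rw [Finset.mem_powerset] at hω
    have hd : ∀ e ∈ ω, ¬ e.IsDiag := fun e he =>
      G.not_isDiag_of_mem_edgeSet (SimpleGraph.mem_edgeFinset.mp (hω he))
    rw [Finset.prod_congr rfl fun e (he : e ∈ ω) => edgeSpin_eq σ e, ← map_prod,
      prod_uSpin σ ω hd, ← map_mul, ← Finset.prod_mul_distrib]
    congr 1
    exact Finset.prod_congr rfl fun v _ => by rw [pow_add, mul_comm]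
  calc ∑ σ : V → ℤˣ, uval (∏ v, σ v ^ c v) *
        Real.exp (β * ∑ e ∈ G.edgeFinset, edgeSpin σ e)
      = ∑ σ : V → ℤˣ, Real.cosh β ^ G.edgeFinset.card *
          ∑ ω ∈ G.edgeFinset.powerset, Real.tanh β ^ ω.card *
            (uval (∏ v, σ v ^ c v) * ∏ e ∈ ω, edgeSpin σ e) := by
        refine Finset.sum_congr rfl fun σ _ => ?_
        rw [mul_sum, Real.exp_sum, Finset.prod_congr rfl fun e _ => hexp σ e,
          Finset.prod_mul_distrib, Finset.prod_const, hprod σ, Finset.mul_sum,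
          Finset.mul_sum, Finset.mul_sum]
        exact Finset.sum_congr rfl fun ω _ => by ring
    _ = Real.cosh β ^ G.edgeFinset.card *
          ∑ ω ∈ G.edgeFinset.powerset, Real.tanh β ^ ω.card *
            (if ∀ v, Even ((ω.filter (fun e => v ∈ e)).card + c v)
              then (2 : ℝ) ^ Fintype.card V else 0) := by
        rw [← Finset.mul_sum, Finset.sum_comm]
        congr 1
        refine Finset.sum_congr rfl fun ω hω => ?_
        rw [← Finset.mul_sum]
        congr 1
        rw [Finset.sum_congr rfl fun σ _ => hinner σ ω hω, sum_sigma_prod]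
    _ = _ := by
        rw [mul_assoc]
        congr 1
        rw [Finset.sum_filter, Finset.mul_sum]
        exact Finset.sum_congr rfl fun ω _ => by split_ifs <;> ring

lemma prefactor {V : Type*} [Fintype V] [DecidableEq V] (a b : V) (hab : a ≠ b) (σ : V → ℤˣ) :
    (∏ v, σ v ^ (if v = a ∨ v = b then 1 else 0)) = σ a * σ b := by
  have h1 : (univ.filter (fun v => v = a ∨ v = b)) = {a, b} := by ext v; simp
  calc ∏ v, σ v ^ (if v = a ∨ v = b then 1 else 0)
      = ∏ v ∈ univ.filter (fun v => v = a ∨ v = b), σ v := by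
        rw [Finset.prod_filter]
        exact Finset.prod_congr rfl fun v _ => by split_ifs <;> simp
    _ = σ a * σ b := by rw [h1, Finset.prod_pair hab]

/-- **High temperature expansion of the two-point function.**
For the Ising model on a finite graph `G` at inverse temperature `β > 0` with free
boundary conditions, the correlation `μ[σ_a σ_b]` equals
`(Σ_{ω ∈ E_G(a,b)} tanh(β)^{|ω|}) / (Σ_{ω ∈ E_G} tanh(β)^{|ω|})`,
where `E_G(a,b)` consists of edge subsets in which every vertex has even degree except
`a` and `b`, which have odd degree, and `E_G` consists of even edge subsets. -/
theorem ising_two_point_high_temperature_expansion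
    {V : Type*} [Fintype V] [DecidableEq V] (G : SimpleGraph V) [DecidableRel G.Adj]
    (β : ℝ) (hβ : 0 < β) (a b : V) (hab : a ≠ b) :
    (∑ σ : V → ℤˣ, (((σ a * σ b : ℤˣ) : ℤ) : ℝ) *
        Real.exp (β * ∑ e ∈ G.edgeFinset, edgeSpin σ e)) /
      (∑ σ : V → ℤˣ, Real.exp (β * ∑ e ∈ G.edgeFinset, edgeSpin σ e)) =
    (∑ ω ∈ G.edgeFinset.powerset.filter
        (fun ω => ∀ v : V,
          if v = a ∨ v = b then Odd ((ω.filter (fun e => v ∈ e)).card)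
          else Even ((ω.filter (fun e => v ∈ e)).card)),
        Real.tanh β ^ ω.card) /
    (∑ ω ∈ G.edgeFinset.powerset.filter
        (fun ω => ∀ v : V, Even ((ω.filter (fun e => v ∈ e)).card)),
        Real.tanh β ^ ω.card) := by
  
  have e1 : (∑ σ : V → ℤˣ, (((σ a * σ b : ℤˣ) : ℤ) : ℝ) *
        Real.exp (β * ∑ e ∈ G.edgeFinset, edgeSpin σ e)) =
      (Real.cosh β ^ G.edgeFinset.card * 2 ^ Fintype.card V) *
      ∑ ω ∈ G.edgeFinset.powerset.filter
        (fun ω => ∀ v : V,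
          if v = a ∨ v = b then Odd ((ω.filter (fun e => v ∈ e)).card)
          else Even ((ω.filter (fun e => v ∈ e)).card)),
        Real.tanh β ^ ω.card := by
    have hm := master G β (fun v => if v = a ∨ v = b then 1 else 0)
    have key : ∀ σ : V → ℤˣ, uval (∏ v, σ v ^ (if v = a ∨ v = b then 1 else 0)) =
        (((σ a * σ b : ℤˣ) : ℤ) : ℝ) := fun σ => by rw [prefactor a b hab σ]; rfl
    simp only [key] at hm
    have hfilter : G.edgeFinset.powerset.filter
        (fun ω => ∀ v : V, Even ((ω.filter (fun e => v ∈ e)).card +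
          if v = a ∨ v = b then 1 else 0)) =
        G.edgeFinset.powerset.filter
        (fun ω => ∀ v : V,
          if v = a ∨ v = b then Odd ((ω.filter (fun e => v ∈ e)).card)
          else Even ((ω.filter (fun e => v ∈ e)).card)) := by
      refine Finset.filter_congr fun ω _ => ?_
      refine forall_congr' fun v => ?_
      by_cases h : v = a ∨ v = b <;>
        simp [h, Nat.even_add_one, Nat.not_even_iff_odd]
    rw [hm, hfilter]
  have e2 : (∑ σ : V → ℤˣ, Real.exp (β * ∑ e ∈ G.edgeFinset, edgeSpin σ e)) =
      (Real.cosh β ^ G.edgeFinset.card * 2 ^ Fintype.card V) *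
      ∑ ω ∈ G.edgeFinset.powerset.filter
        (fun ω => ∀ v : V, Even ((ω.filter (fun e => v ∈ e)).card)),
        Real.tanh β ^ ω.card := by
    have hm := master G β (fun _ => 0)
    simp only [pow_zero, Finset.prod_const_one, map_one, one_mul, add_zero] at hm
    exact hm
  rw [e1, e2, mul_div_mul_left _ _ (by positivity : Real.cosh β ^ G.edgeFinset.card *
    2 ^ Fintype.card V ≠ 0)]
end

section
/- Let f be an s-holomorphic function on a simply connected medial domain Ω_δ^⋄. Then for each medial vertex v with four incident medial edges n, e, s, w (with ℓ(n) ⊥ ℓ(s) and ℓ(e) ⊥ ℓ(w)), the identity |P_{ℓ(n)}[f(v)]|² + |P_{ℓ(s)}[f(v)]|² = |f(v)|² = |P_{ℓ(e)}[f(v)]|² + |P_{ℓ(w)}[f(v)]|² holds; consequently there exists a well-defined function H on the union of black and white faces, unique up to an additive constant, satisfying H(b) - H(w) = δ·|P_{ℓ(e)}[f(x)]|² for each medial edge e = [xy] separating black face b from white face w. -/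
/-- Orthogonal projection of `z ∈ ℂ` onto the line `u·ℝ` through the origin
(for `|u| = 1`): `P_{uℝ}(z) = (z + u² z̄)/2`. -/
noncomputable def lineProj (u z : ℂ) : ℂ := (z + u ^ 2 * (starRingEnd ℂ) z) / 2

/-- In the medial lattice of mesh `δ`, faces are indexed by `ℤ²`, a face `(m,n)` being
black iff `m + n` is even, and medial vertices are indexed by `ℤ²` (the vertex `(m,n)`
being the common corner of the faces `(m,n)`, `(m+1,n)`, `(m,n+1)`, `(m+1,n+1)`).
`uVertEdge m n` spans the line `ℓ(e) = √(ē)ℝ` of the (oriented, counterclockwise around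
black faces) medial edge separating the faces `(m,n)` and `(m+1,n)`. -/
noncomputable def uVertEdge (m n : ℤ) : ℂ :=
  if Even (m + n) then Complex.exp (-(Real.pi / 4) * Complex.I)
  else Complex.exp (Real.pi / 4 * Complex.I)

/-- The direction spanning the line `ℓ(e)` of the medial edge separating the faces
`(m,n)` and `(m,n+1)`. -/
noncomputable def uHorEdge (m n : ℤ) : ℂ := if Even (m + n) then Complex.I else 1

/-- `H` is a primitive of `Im(f² dz)`: across each medial edge `e = [xy]` separating a
black face `b` from a white face `w`, `H(b) - H(w) = δ |P_{ℓ(e)}[f(x)]|²`.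
The medial edge separating faces `(m,n)` and `(m+1,n)` has endpoints the medial
vertices `(m,n)` and `(m,n-1)`; the one separating `(m,n)` and `(m,n+1)` has endpoints
`(m,n)` and `(m-1,n)`. -/
noncomputable def IsPrimitiveOfImFSq (δ : ℝ) (f : ℤ × ℤ → ℂ) (H : ℤ × ℤ → ℝ) : Prop :=
  ∀ m n : ℤ,
    ((if Even (m + n) then H (m, n) - H (m + 1, n) else H (m + 1, n) - H (m, n))
      = δ * ‖lineProj (uVertEdge m n) (f (m, n))‖ ^ 2) ∧
    ((if Even (m + n) then H (m, n) - H (m, n + 1) else H (m, n + 1) - H (m, n))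
      = δ * ‖lineProj (uHorEdge m n) (f (m, n))‖ ^ 2)

/-! ### Auxiliary lemmas -/

lemma pyth (z u : ℂ) (hu : ‖u‖ = 1) :
    ‖lineProj u z‖ ^ 2 + ‖lineProj (Complex.I * u) z‖ ^ 2
      = ‖z‖ ^ 2 := by
  have h2 : lineProj (Complex.I * u) z = (z - u ^ 2 * (starRingEnd ℂ) z) / 2 := by
    unfold lineProj; rw [mul_pow, Complex.I_sq]; ring
  rw [h2]
  show ‖(z + u ^ 2 * (starRingEnd ℂ) z) / 2‖ ^ 2 + _ = _
  set b := u ^ 2 * (starRingEnd ℂ) z with hb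
  have hnb : Complex.normSq b = Complex.normSq z := by
    have : ‖b‖ = ‖z‖ := by
      rw [hb, norm_mul, norm_pow, hu]; simp
    rw [← Complex.sq_norm, this, Complex.sq_norm]
  rw [Complex.sq_norm, Complex.sq_norm, Complex.sq_norm]
  have hd : ∀ x : ℂ, Complex.normSq (x / 2) = Complex.normSq x / 4 := by
    intro x; rw [map_div₀]; norm_num
  rw [hd, hd, Complex.normSq_add, Complex.normSq_sub, hnb]
  ring

lemma exp_pi4_sq : (Complex.exp (Real.pi / 4 * Complex.I)) ^ 2 = Complex.I := by
  rw [sq, ← Complex.exp_add]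
  have e : (Real.pi / 4 : ℂ) * Complex.I + (Real.pi / 4 : ℂ) * Complex.I
      = ((Real.pi / 2 : ℝ) : ℂ) * Complex.I := by push_cast; ring
  rw [e, Complex.exp_mul_I, ← Complex.ofReal_cos, ← Complex.ofReal_sin]
  simp [Real.cos_pi_div_two, Real.sin_pi_div_two]

lemma exp_neg_pi4_sq : (Complex.exp (-(Real.pi / 4) * Complex.I)) ^ 2 = -Complex.I := by
  rw [sq, ← Complex.exp_add]
  have e : (-(Real.pi / 4) : ℂ) * Complex.I + (-(Real.pi / 4) : ℂ) * Complex.I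
      = ((-(Real.pi / 2) : ℝ) : ℂ) * Complex.I := by push_cast; ring
  rw [e, Complex.exp_mul_I, ← Complex.ofReal_cos, ← Complex.ofReal_sin]
  simp [Real.cos_pi_div_two, Real.sin_pi_div_two]

lemma lineProj_congr {u v : ℂ} (h : u ^ 2 = v ^ 2) (z : ℂ) : lineProj u z = lineProj v z := by
  unfold lineProj; rw [h]

/-- Pythagoras for the pair of diagonal directions. -/
lemma pyth_vert (z : ℂ) :
    ‖lineProj (Complex.exp (-(Real.pi / 4) * Complex.I)) z‖ ^ 2
      + ‖lineProj (Complex.exp (Real.pi / 4 * Complex.I)) z‖ ^ 2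
      = ‖z‖ ^ 2 := by
  have h1 : lineProj (Complex.exp (Real.pi / 4 * Complex.I)) z
      = lineProj (Complex.I * Complex.exp (-(Real.pi / 4) * Complex.I)) z :=
    lineProj_congr (by rw [exp_pi4_sq, mul_pow, Complex.I_sq, exp_neg_pi4_sq]; ring) z
  rw [h1]
  exact pyth z _ (by rw [Complex.norm_exp]; simp)

/-- Pythagoras for the pair of axis directions. -/
lemma pyth_hor (z : ℂ) :
    ‖lineProj 1 z‖ ^ 2 + ‖lineProj Complex.I z‖ ^ 2
      = ‖z‖ ^ 2 := by
  have := pyth z 1 (by simp)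
  rwa [mul_one] at this

/-- Increment of `H` from face `(m,n)` to face `(m+1,n)`. -/
noncomputable def Dx (δ : ℝ) (f : ℤ × ℤ → ℂ) (m n : ℤ) : ℝ :=
  if Even (m + n) then -(δ * ‖lineProj (uVertEdge m n) (f (m, n))‖ ^ 2)
  else δ * ‖lineProj (uVertEdge m n) (f (m, n))‖ ^ 2

/-- Increment of `H` from face `(m,n)` to face `(m,n+1)`. -/
noncomputable def Dy (δ : ℝ) (f : ℤ × ℤ → ℂ) (m n : ℤ) : ℝ :=
  if Even (m + n) then -(δ * ‖lineProj (uHorEdge m n) (f (m, n))‖ ^ 2)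
  else δ * ‖lineProj (uHorEdge m n) (f (m, n))‖ ^ 2

lemma prim_iff (δ : ℝ) (f : ℤ × ℤ → ℂ) (H : ℤ × ℤ → ℝ) :
    IsPrimitiveOfImFSq δ f H ↔
    ∀ m n : ℤ, H (m + 1, n) - H (m, n) = Dx δ f m n ∧
      H (m, n + 1) - H (m, n) = Dy δ f m n := by
  unfold IsPrimitiveOfImFSq Dx Dy
  constructor <;> intro h m n <;> obtain ⟨h1, h2⟩ := h m n <;>
    by_cases hp : Even (m + n) <;>
      simp only [hp, if_true, if_false, if_pos, if_neg, not_false_iff] at h1 h2 ⊢ <;>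
      constructor <;> linarith

/-- The discrete curl of `(Dx, Dy)` around the medial vertex `(m,n)` vanishes. -/
lemma curl (δ : ℝ) (f : ℤ × ℤ → ℂ)
    (hsV : ∀ m n : ℤ,
      lineProj (uVertEdge m n) (f (m, n)) = lineProj (uVertEdge m n) (f (m, n - 1)))
    (hsH : ∀ m n : ℤ,
      lineProj (uHorEdge m n) (f (m, n)) = lineProj (uHorEdge m n) (f (m - 1, n)))
    (m n : ℤ) :
    Dx δ f m n + Dy δ f (m + 1) n = Dy δ f m n + Dx δ f m (n + 1) := by
  have hV := hsV m (n + 1)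
  have hH := hsH (m + 1) n
  simp only [add_sub_cancel_right] at hV hH
  by_cases hp : Even (m + n)
  · have hp1 : ¬ Even (m + 1 + n) := by
      rw [(by ring : m + 1 + n = (m + n) + 1), Int.even_add_one]; simpa using hp
    have hp2 : ¬ Even (m + (n + 1)) := by
      rw [(by ring : m + (n + 1) = (m + n) + 1), Int.even_add_one]; simpa using hp
    simp only [Dx, Dy, uVertEdge, uHorEdge, hp, hp1, hp2, if_true, if_false] at hV hH ⊢
    rw [hV, hH]
    linear_combination δ * pyth_hor (f (m, n)) - δ * pyth_vert (f (m, n))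
  · have hp1 : Even (m + 1 + n) := by
      rw [(by ring : m + 1 + n = (m + n) + 1), Int.even_add_one]; simpa using hp
    have hp2 : Even (m + (n + 1)) := by
      rw [(by ring : m + (n + 1) = (m + n) + 1), Int.even_add_one]; simpa using hp
    simp only [Dx, Dy, uVertEdge, uHorEdge, hp, hp1, hp2, if_true, if_false] at hV hH ⊢
    rw [hV, hH]
    linear_combination δ * pyth_vert (f (m, n)) - δ * pyth_hor (f (m, n))

/-! ### Signed sums over `ℤ` -/

noncomputable def zsum (g : ℤ → ℝ) (n : ℤ) : ℝ :=
  if 0 ≤ n then ∑ k ∈ Finset.Ico (0:ℤ) n, g k else -∑ k ∈ Finset.Ico n 0, g k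

lemma Ico_singleton (n : ℤ) : Finset.Ico n (n + 1) = {n} := by
  ext x; simp; omega

lemma zsum_succ (g : ℤ → ℝ) (n : ℤ) : zsum g (n + 1) = zsum g n + g n := by
  rcases le_or_gt 0 n with h | h
  · unfold zsum
    rw [if_pos h, if_pos (by omega),
      ← Finset.Ico_union_Ico_eq_Ico h (by omega : n ≤ n + 1),
      Finset.sum_union (Finset.Ico_disjoint_Ico_consecutive _ _ _), Ico_singleton,
      Finset.sum_singleton]
  · have hb : zsum g (n + 1) = -∑ k ∈ Finset.Ico (n + 1) 0, g k := by
      unfold zsum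
      rcases eq_or_lt_of_le (by omega : n + 1 ≤ 0) with h1 | h1
      · rw [← h1]; simp
      · rw [if_neg (by omega)]
    rw [hb]
    unfold zsum
    rw [if_neg (by omega),
      ← Finset.Ico_union_Ico_eq_Ico (by omega : n ≤ n + 1) (by omega : n + 1 ≤ 0),
      Finset.sum_union (Finset.Ico_disjoint_Ico_consecutive _ _ _), Ico_singleton,
      Finset.sum_singleton]
    ring

lemma zsum_zero (g : ℤ → ℝ) : zsum g 0 = 0 := by unfold zsum; simp

lemma zsum_sub (g h : ℤ → ℝ) (n : ℤ) :
    zsum (fun k => g k - h k) n = zsum g n - zsum h n := by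
  induction n using Int.induction_on with
  | zero => simp [zsum_zero]
  | succ k ih => rw [zsum_succ, zsum_succ, zsum_succ, ih]; ring
  | pred k ih =>
    have e : (-(k:ℤ) - 1) + 1 = -(k:ℤ) := by ring
    have h1 := zsum_succ (fun j => g j - h j) (-(k:ℤ) - 1)
    have h2 := zsum_succ g (-(k:ℤ) - 1)
    have h3 := zsum_succ h (-(k:ℤ) - 1)
    rw [e] at h1 h2 h3
    linarith

lemma zsum_tel (h : ℤ → ℝ) (n : ℤ) :
    zsum (fun k => h (k + 1) - h k) n = h n - h 0 := by
  induction n using Int.induction_on with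
  | zero => simp [zsum_zero]
  | succ k ih =>
    have h1 := zsum_succ (fun j => h (j + 1) - h j) (k : ℤ)
    rw [h1, ih]; ring
  | pred k ih =>
    have e : (-(k:ℤ) - 1) + 1 = -(k:ℤ) := by ring
    have h1 := zsum_succ (fun j => h (j + 1) - h j) (-(k:ℤ) - 1)
    rw [e] at h1
    linarith

/-- The candidate primitive: sum `Dx` along row `0`, then `Dy` up column `m`. -/
noncomputable def Hfun (δ : ℝ) (f : ℤ × ℤ → ℂ) (v : ℤ × ℤ) : ℝ :=
  zsum (fun k => Dx δ f k 0) v.1 + zsum (fun k => Dy δ f v.1 k) v.2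

lemma Hfun_y (δ : ℝ) (f : ℤ × ℤ → ℂ) (m n : ℤ) :
    Hfun δ f (m, n + 1) - Hfun δ f (m, n) = Dy δ f m n := by
  unfold Hfun
  simp only
  rw [zsum_succ]
  ring

lemma Hfun_x (δ : ℝ) (f : ℤ × ℤ → ℂ)
    (hsV : ∀ m n : ℤ,
      lineProj (uVertEdge m n) (f (m, n)) = lineProj (uVertEdge m n) (f (m, n - 1)))
    (hsH : ∀ m n : ℤ,
      lineProj (uHorEdge m n) (f (m, n)) = lineProj (uHorEdge m n) (f (m - 1, n)))
    (m n : ℤ) :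
    Hfun δ f (m + 1, n) - Hfun δ f (m, n) = Dx δ f m n := by
  unfold Hfun
  simp only
  rw [zsum_succ]
  have e2 : zsum (fun k => Dy δ f (m + 1) k) n - zsum (fun k => Dy δ f m k) n
      = zsum (fun k => Dy δ f (m + 1) k - Dy δ f m k) n := (zsum_sub _ _ n).symm
  have e3 : (fun k => Dy δ f (m + 1) k - Dy δ f m k)
      = (fun k => Dx δ f m (k + 1) - Dx δ f m k) := by
    funext k
    have := curl δ f hsV hsH m k
    linarith
  have e4 : zsum (fun k => Dy δ f (m + 1) k) n - zsum (fun k => Dy δ f m k) n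
      = Dx δ f m n - Dx δ f m 0 := by
    rw [e2, e3, zsum_tel]
  linarith

/-- **Existence of the discrete primitive `H = ½ Im ∫ f²` for an s-holomorphic `f`.**
For `f` s-holomorphic on the (simply connected) medial lattice of mesh `δ` — the
projections of `f` at the two endpoints of each medial edge `e` onto the line `ℓ(e)`
agree — we have, for each medial vertex `v` and perpendicular pairs of lines,
`|P_{ℓ(n)}[f(v)]|² + |P_{ℓ(s)}[f(v)]|² = |f(v)|² = |P_{ℓ(e)}[f(v)]|² + |P_{ℓ(w)}[f(v)]|²`;
consequently there exists `H`, defined on black and white faces and unique up to an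
additive constant, with increment `δ |P_{ℓ(e)}[f]|²` from white to black across each
medial edge. -/
theorem sHolomorphic_primitive_exists (δ : ℝ) (hδ : 0 < δ) (f : ℤ × ℤ → ℂ)
    (hsV : ∀ m n : ℤ,
      lineProj (uVertEdge m n) (f (m, n)) = lineProj (uVertEdge m n) (f (m, n - 1)))
    (hsH : ∀ m n : ℤ,
      lineProj (uHorEdge m n) (f (m, n)) = lineProj (uHorEdge m n) (f (m - 1, n))) :
    (∀ (z u : ℂ), ‖u‖ = 1 →
      ‖lineProj u z‖ ^ 2 + ‖lineProj (Complex.I * u) z‖ ^ 2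
        = ‖z‖ ^ 2) ∧
    ∃ H : ℤ × ℤ → ℝ, IsPrimitiveOfImFSq δ f H ∧
      ∀ H' : ℤ × ℤ → ℝ, IsPrimitiveOfImFSq δ f H' →
        ∃ c : ℝ, ∀ v : ℤ × ℤ, H' v = H v + c := by
  refine ⟨fun z u hu => pyth z u hu, Hfun δ f, ?_, ?_⟩
  · exact (prim_iff δ f _).mpr fun m n => ⟨Hfun_x δ f hsV hsH m n, Hfun_y δ f m n⟩
  · intro H' hH'
    have h' := (prim_iff δ f H').mp hH'
    refine ⟨H' (0, 0) - Hfun δ f (0, 0), ?_⟩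
    have hx : ∀ m n : ℤ, H' (m + 1, n) - Hfun δ f (m + 1, n) = H' (m, n) - Hfun δ f (m, n) := by
      intro m n
      have h1 := (h' m n).1
      have h2 := Hfun_x δ f hsV hsH m n
      linarith
    have hy : ∀ m n : ℤ, H' (m, n + 1) - Hfun δ f (m, n + 1) = H' (m, n) - Hfun δ f (m, n) := by
      intro m n
      have h1 := (h' m n).2
      have h2 := Hfun_y δ f m n
      linarith
    have col : ∀ m n : ℤ, H' (m, n) - Hfun δ f (m, n) = H' (m, 0) - Hfun δ f (m, 0) := by
      intro m n
      induction n using Int.induction_on with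
      | zero => rfl
      | succ k ih => rw [hy m k, ih]
      | pred k ih =>
        have e : (-(k:ℤ) - 1) + 1 = -(k:ℤ) := by ring
        have h1 := hy m (-(k:ℤ) - 1)
        rw [e] at h1
        linarith
    have row : ∀ m : ℤ, H' (m, 0) - Hfun δ f (m, 0) = H' (0, 0) - Hfun δ f (0, 0) := by
      intro m
      induction m using Int.induction_on with
      | zero => rfl
      | succ k ih => rw [hx k 0, ih]
      | pred k ih =>
        have e : (-(k:ℤ) - 1) + 1 = -(k:ℤ) := by ring
        have h1 := hx (-(k:ℤ) - 1) 0
        rw [e] at h1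
        linarith
    intro v
    obtain ⟨m, n⟩ := v
    have := (col m n).trans (row m)
    linarith
end
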